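/- Let (Ω, ℱ, P) and (S, Σ, ν) be finite measure spaces and m, n ∈ ℕ. Let (f_k)_{k∈ℕ} be a sequence of (ℱ ⊗ Σ)-measurable functions from Ω × S to ℝ^m, each integrable with respect to P ⊗ ν, which is uniformly integrable on (Ω × S, ℱ ⊗ Σ, P ⊗ ν). Let f : Ω × S → ℝ^m be (P ⊗ ν)-integrable and suppose that for P-a.e. ω ∈ Ω, f_k(ω, ·) converges to f(ω, ·) weakly in L¹(S; ℝ^m), i.e. ∫_S f_k(ω, s) · φ(s) dν(s) → ∫_S f(ω, s) · φ(s) dν(s) for every bounded measurable φ : S → ℝ^m. Then f_k converges to f weakly in L¹(Ω × S; ℝ^m): for every bounded (ℱ ⊗ Σ)-measurable ψ : Ω × S → ℝ^m, ∫_{Ω×S} f_k · ψ d(P ⊗ ν) → ∫_{Ω×S} f · ψ d(P ⊗ ν). -/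

import Mathlib

open MeasureTheory Filter RealInnerProductSpace

/-- A family `(f i)_{i ∈ I}` of `E`-valued measurable functions on a measure space is
uniformly integrable: for every `ε > 0` there is `δ > 0` such that `∫_A ‖f i‖ dm < ε`
for every `i` and every measurable `A` with `m A < δ`. -/
def UnifIntFamily {X : Type*} [MeasurableSpace X] (m : Measure X) {E : Type*}
    [NormedAddCommGroup E] {I : Type*} (f : I → X → E) : Prop :=
  ∀ ε > (0 : ℝ), ∃ δ > (0 : ℝ), ∀ i : I, ∀ A : Set X, MeasurableSet A →
    m A < ENNReal.ofReal δ → ∫ x in A, ‖f i x‖ ∂m < ε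

theorem pathwise_weak_L1_convergence_implies_product_weak_L1_convergence
    {Ω S : Type*} [MeasurableSpace Ω] [MeasurableSpace S]
    (P : Measure Ω) [IsFiniteMeasure P] (ν : Measure S) [IsFiniteMeasure ν]
    {m : ℕ}
    (f : ℕ → Ω × S → EuclideanSpace ℝ (Fin m))
    (hfm : ∀ k, Measurable (f k))
    (hfi : ∀ k, Integrable (f k) (P.prod ν))
    (hUI : UnifIntFamily (P.prod ν) f)
    (g : Ω × S → EuclideanSpace ℝ (Fin m))
    (hgi : Integrable g (P.prod ν))
    (hweak : ∀ᵐ ω ∂P, ∀ φ : S → EuclideanSpace ℝ (Fin m), Measurable φ →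
      (∃ C : ℝ, ∀ s, ‖φ s‖ ≤ C) →
      Tendsto (fun k => ∫ s, ⟪f k (ω, s), φ s⟫ ∂ν) atTop
        (nhds (∫ s, ⟪g (ω, s), φ s⟫ ∂ν))) :
    ∀ ψ : Ω × S → EuclideanSpace ℝ (Fin m), Measurable ψ →
      (∃ C : ℝ, ∀ p, ‖ψ p‖ ≤ C) →
      Tendsto (fun k => ∫ p, ⟪f k p, ψ p⟫ ∂(P.prod ν)) atTop
        (nhds (∫ p, ⟪g p, ψ p⟫ ∂(P.prod ν))) := by
  rintro ψ hψm ⟨C₀, hC₀⟩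
  set C : ℝ := max C₀ 0 + 1 with hCdef
  have hCpos : 0 < C := by positivity
  have hψC : ∀ p, ‖ψ p‖ ≤ C := fun p =>
    (hC₀ p).trans (by simp [hCdef]; linarith [le_max_left C₀ (0:ℝ)])
  have hinner_meas : ∀ k, Measurable fun p => ⟪f k p, ψ p⟫ := fun k =>
    (hfm k).inner hψm
  have key_bound : ∀ (h : Ω × S → EuclideanSpace ℝ (Fin m)) (p : Ω × S),
      ‖⟪h p, ψ p⟫‖ ≤ C * ‖h p‖ := by
    intro h p
    calc ‖⟪h p, ψ p⟫‖ = |⟪h p, ψ p⟫| := Real.norm_eq_abs _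
      _ ≤ ‖h p‖ * ‖ψ p‖ := abs_real_inner_le_norm _ _
      _ ≤ ‖h p‖ * C := by
          exact mul_le_mul_of_nonneg_left (hψC p) (norm_nonneg _)
      _ = C * ‖h p‖ := mul_comm _ _
  have hinner_int : ∀ k, Integrable (fun p => ⟪f k p, ψ p⟫) (P.prod ν) := by
    intro k
    refine ((hfi k).norm.const_mul C).mono' (hinner_meas k).aestronglyMeasurable ?_
    exact Filter.Eventually.of_forall fun p => key_bound (f k) p
  have hginner_int : Integrable (fun p => ⟪g p, ψ p⟫) (P.prod ν) := by
    refine (hgi.norm.const_mul C).mono'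
      (hgi.aestronglyMeasurable.inner hψm.aestronglyMeasurable) ?_
    exact Filter.Eventually.of_forall fun p => key_bound g p
  set F : ℕ → Ω → ℝ := fun k ω => ∫ s, ⟪f k (ω, s), ψ (ω, s)⟫ ∂ν with hF
  set G : Ω → ℝ := fun ω => ∫ s, ⟪g (ω, s), ψ (ω, s)⟫ ∂ν with hG
  have hFint : ∀ k, Integrable (F k) P := fun k => (hinner_int k).integral_prod_left
  have hGint : Integrable G P := hginner_int.integral_prod_left
  have hfub : ∀ k, ∫ p, ⟪f k p, ψ p⟫ ∂(P.prod ν) = ∫ ω, F k ω ∂P := fun k =>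
    MeasureTheory.integral_prod _ (hinner_int k)
  have hgub : ∫ p, ⟪g p, ψ p⟫ ∂(P.prod ν) = ∫ ω, G ω ∂P :=
    MeasureTheory.integral_prod _ hginner_int
  simp_rw [hfub, hgub]
  -- a.e. pointwise convergence of F k to G
  have hae : ∀ᵐ ω ∂P, Tendsto (fun k => F k ω) atTop (nhds (G ω)) := by
    filter_upwards [hweak] with ω hω
    exact hω (fun s => ψ (ω, s)) (hψm.comp measurable_prodMk_left)
      ⟨C, fun s => hψC _⟩
  -- uniform integrability of F on Ω
  have hUIΩ : UnifIntegrable F 1 P := by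
    intro ε hε
    obtain ⟨δ', hδ', hδ⟩ := hUI (ε / C) (div_pos hε hCpos)
    set t : ℝ := (ν Set.univ).toReal with ht
    have htnn : 0 ≤ t := ENNReal.toReal_nonneg
    refine ⟨δ' / (t + 1), div_pos hδ' (by positivity), ?_⟩
    intro k A hA hAle
    -- the product set has small measure
    have hprod_small : (P.prod ν) (A ×ˢ Set.univ) < ENNReal.ofReal δ' := by
      rw [Measure.prod_prod]
      have hν : ν Set.univ = ENNReal.ofReal t := (ENNReal.ofReal_toReal (measure_ne_top ν _)).symm
      calc P A * ν Set.univ ≤ ENNReal.ofReal (δ' / (t + 1)) * ENNReal.ofReal t := by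
            rw [hν]; exact mul_le_mul_left hAle _
        _ = ENNReal.ofReal (δ' / (t + 1) * t) := (ENNReal.ofReal_mul (by positivity)).symm
        _ < ENNReal.ofReal δ' := by
            apply ENNReal.ofReal_lt_ofReal_iff hδ' |>.mpr
            rw [div_mul_eq_mul_div]
            rw [div_lt_iff₀ (by positivity)]
            nlinarith
    have hsmall := hδ k (A ×ˢ Set.univ) (hA.prod MeasurableSet.univ) hprod_small
    -- bound ∫ x in A, ‖F k x‖ ∂P
    have hBint : Integrable (fun ω => ∫ s, ‖f k (ω, s)‖ ∂ν) P :=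
      (hfi k).norm.integral_prod_left
    have hbound : ∀ᵐ ω ∂P, ‖F k ω‖ ≤ C * ∫ s, ‖f k (ω, s)‖ ∂ν := by
      filter_upwards [(hfi k).prod_right_ae] with ω hωint
      calc ‖F k ω‖ ≤ ∫ s, ‖⟪f k (ω, s), ψ (ω, s)⟫‖ ∂ν := norm_integral_le_integral_norm _
        _ ≤ ∫ s, C * ‖f k (ω, s)‖ ∂ν := by
            refine integral_mono_of_nonneg (Filter.Eventually.of_forall fun s => norm_nonneg _)
              (hωint.norm.const_mul C) (Filter.Eventually.of_forall fun s => key_bound (f k) _)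
        _ = C * ∫ s, ‖f k (ω, s)‖ ∂ν := integral_const_mul C _
    have hAint : ∫ x in A, ‖F k x‖ ∂P ≤ C * ∫ p in A ×ˢ Set.univ, ‖f k p‖ ∂(P.prod ν) := by
      have h1 : ∫ x in A, ‖F k x‖ ∂P ≤ ∫ x in A, C * ∫ s, ‖f k (x, s)‖ ∂ν ∂P := by
        refine integral_mono_ae (hFint k).norm.restrict ((hBint.const_mul C).restrict)
          (ae_restrict_of_ae hbound)
      have h2 : ∫ x in A, C * ∫ s, ‖f k (x, s)‖ ∂ν ∂P
          = C * ∫ x in A, ∫ s, ‖f k (x, s)‖ ∂ν ∂P := integral_const_mul C _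
      have hint : Integrable (fun p : Ω × S => ‖f k p‖) ((P.restrict A).prod ν) := by
        rw [Measure.restrict_prod_eq_prod_univ]
        exact (hfi k).norm.restrict
      have h3 : ∫ x in A, ∫ s, ‖f k (x, s)‖ ∂ν ∂P
          = ∫ p in A ×ˢ Set.univ, ‖f k p‖ ∂(P.prod ν) := by
        rw [← Measure.restrict_prod_eq_prod_univ A]
        exact (MeasureTheory.integral_prod _ hint).symm
      rw [h2, h3] at h1
      exact h1
    have hfinal : ∫ x in A, ‖F k x‖ ∂P ≤ ε := by
      refine hAint.trans ?_
      have := mul_le_mul_of_nonneg_left hsmall.le hCpos.le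
      rwa [mul_div_cancel₀ ε hCpos.ne'] at this
    rw [eLpNorm_indicator_eq_eLpNorm_restrict hA, eLpNorm_one_eq_lintegral_enorm,
      ← ofReal_integral_norm_eq_lintegral_enorm (hFint k).restrict]
    exact ENNReal.ofReal_le_ofReal hfinal
  -- Vitali
  have hmeasF : ∀ k, AEStronglyMeasurable (F k) P := fun k => (hFint k).aestronglyMeasurable
  have hGmem : MemLp G 1 P := memLp_one_iff_integrable.mpr hGint
  have htm : TendstoInMeasure P F atTop G := tendstoInMeasure_of_tendsto_ae hmeasF hae
  have hL1 : Tendsto (fun k => eLpNorm (F k - G) 1 P) atTop (nhds 0) :=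
    tendsto_Lp_finite_of_tendstoInMeasure le_rfl ENNReal.one_ne_top hmeasF hGmem hUIΩ htm
  exact tendsto_integral_of_L1' G hGint.aestronglyMeasurable (Filter.Eventually.of_forall hFint) hL1
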